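/- Let 1 < ℓ < n−1 and α ∈ C(n,ℓ). Then |α| = ‖α‖ (with |α| > 0) if and only if α = (n−ℓ, n−ℓ+2, n−ℓ+3, …, n), in which case |α| = ‖α‖ = 1. If ℓ = 1 or ℓ = n−1, then |α| = ‖α‖ for all α. -/

import Mathlib

/-- `dim(α) = Σᵢ (αᵢ - i)` (0-based: `Σ a - card(card-1)/2`). -/
def dimC {n : ℕ} (A : Finset (Fin n)) : ℤ :=
  (∑ a ∈ A, (a : ℤ)) - ((A.card : ℤ) * ((A.card : ℤ) - 1)) / 2

/-- The codimension `|α| = ℓ(n-ℓ) - dim(α)` where `ℓ = #A`. -/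
def codimC {n : ℕ} (A : Finset (Fin n)) : ℤ :=
  (A.card : ℤ) * ((n : ℤ) - (A.card : ℤ)) - dimC A

/-- Componentwise order on Schubert conditions: comparing the sorted lists of
elements entrywise. -/
def cleC {n : ℕ} (A B : Finset (Fin n)) : Prop :=
  List.Forall₂ (· ≤ ·) (A.sort (· ≤ ·)) (B.sort (· ≤ ·))

/-- `‖α‖ := #{β ∈ C(n,ℓ) : β ≰ α}`. -/
noncomputable def normC (n ℓ : ℕ) (A : Finset (Fin n)) : ℕ :=
  Nat.card {B : Finset (Fin n) // B.card = ℓ ∧ ¬ cleC B A}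

/-- The condition `α = (n-ℓ, n-ℓ+2, n-ℓ+3, …, n)` (0-based: values `n-ℓ-1`
and all values `≥ n-ℓ+1`). -/
def hookC (n ℓ : ℕ) : Finset (Fin n) :=
  Finset.univ.filter (fun a : Fin n => (a : ℕ) = n - ℓ - 1 ∨ n - ℓ + 1 ≤ (a : ℕ))

open Finset

section aux
variable {n ℓ : ℕ}

lemma embGap {f : Fin ℓ → Fin n} (hf : StrictMono f) :
    ∀ (d : ℕ) (k : Fin ℓ) (hk : (k : ℕ) + d < ℓ),
      (f k : ℕ) + d ≤ (f ⟨(k : ℕ) + d, hk⟩ : ℕ) := by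
  intro d
  induction d with
  | zero =>
    intro k hk
    have : (⟨(k : ℕ) + 0, hk⟩ : Fin ℓ) = k := by ext; simp
    rw [this]
    omega
  | succ d ih =>
    intro k hk
    have h1 := ih k (by omega)
    have h2 : f ⟨(k : ℕ) + d, by omega⟩ < f ⟨(k : ℕ) + (d + 1), hk⟩ := by
      apply hf
      simp [Fin.lt_def]
    have h3 := Fin.lt_def.mp h2
    omega

lemma le_emb {f : Fin ℓ → Fin n} (hf : StrictMono f) (k : Fin ℓ) : (k : ℕ) ≤ (f k : ℕ) := by
  have h0 : (0 : ℕ) < ℓ := lt_of_le_of_lt (Nat.zero_le _) k.2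
  have := embGap hf (k : ℕ) ⟨0, h0⟩ (by simpa using k.2)
  have he : (⟨(0 : ℕ) + (k : ℕ), by simpa using k.2⟩ : Fin ℓ) = k := by ext; simp
  rw [he] at this
  omega

lemma emb_le {f : Fin ℓ → Fin n} (hf : StrictMono f) (k : Fin ℓ) :
    (f k : ℕ) + ℓ ≤ n + (k : ℕ) := by
  have hk := k.2
  have h1 := embGap hf (ℓ - 1 - (k : ℕ)) k (by omega)
  have h2 := (f ⟨(k : ℕ) + (ℓ - 1 - (k : ℕ)), by omega⟩).2
  omega

lemma cle_iff {A B : Finset (Fin n)} (hA : A.card = ℓ) (hB : B.card = ℓ) :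
    cleC B A ↔ ∀ k : Fin ℓ, B.orderEmbOfFin hB k ≤ A.orderEmbOfFin hA k := by
  rw [cleC, List.forall₂_iff_get]
  constructor
  · rintro ⟨-, h⟩ k
    have := h (k : ℕ) (by rw [Finset.length_sort, hB]; exact k.2)
      (by rw [Finset.length_sort, hA]; exact k.2)
    rw [Finset.orderEmbOfFin_apply, Finset.orderEmbOfFin_apply]
    simpa [List.get_eq_getElem] using this
  · intro h
    refine ⟨by rw [Finset.length_sort, Finset.length_sort, hA, hB], ?_⟩
    intro i h1 h2
    have := h ⟨i, by rw [Finset.length_sort, hB] at h1; exact h1⟩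
    rw [Finset.orderEmbOfFin_apply, Finset.orderEmbOfFin_apply] at this
    simpa [List.get_eq_getElem] using this

lemma eq_image {A : Finset (Fin n)} (hA : A.card = ℓ) :
    A = Finset.image (fun k => A.orderEmbOfFin hA k) Finset.univ := by
  apply Finset.coe_injective
  rw [Finset.coe_image, Finset.coe_univ, Set.image_univ]
  exact (Finset.range_orderEmbOfFin A hA).symm

lemma gauss : ((ℓ : ℤ) * ((ℓ : ℤ) - 1)) / 2 = ∑ k : Fin ℓ, ((k : ℕ) : ℤ) := by
  have h : (∑ k ∈ Finset.range ℓ, (k : ℤ)) * 2 = (ℓ : ℤ) * ((ℓ : ℤ) - 1) := by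
    induction ℓ with
    | zero => simp
    | succ m ih =>
      rw [Finset.sum_range_succ, add_mul, ih]
      push_cast
      ring
  rw [Fin.sum_univ_eq_sum_range (fun i => (i : ℤ)), ← h,
    Int.mul_ediv_cancel _ two_ne_zero]

lemma codim_eq {A : Finset (Fin n)} (hA : A.card = ℓ) :
    codimC A = ((∑ k : Fin ℓ, (n - ℓ + (k : ℕ) - (A.orderEmbOfFin hA k : ℕ))) : ℕ) := by
  have hln : ℓ ≤ n := by rw [← hA]; simpa using Finset.card_le_univ A
  have hs : (∑ x ∈ A, (x : ℤ)) = ∑ k : Fin ℓ, ((A.orderEmbOfFin hA k : ℕ) : ℤ) := by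
    conv_lhs => rw [eq_image hA]
    rw [Finset.sum_image (fun x _ y _ hxy => (A.orderEmbOfFin hA).injective hxy)]
  have hterm : ∀ k : Fin ℓ, ((n - ℓ + (k : ℕ) - (A.orderEmbOfFin hA k : ℕ) : ℕ) : ℤ)
      = (n : ℤ) - ℓ + (k : ℕ) - ((A.orderEmbOfFin hA k : ℕ) : ℤ) := by
    intro k
    have h1 := emb_le (A.orderEmbOfFin hA).strictMono k
    have h2 := k.2
    omega
  have hsplit : ∑ k : Fin ℓ, ((n : ℤ) - ℓ + (k : ℕ) - ((A.orderEmbOfFin hA k : ℕ) : ℤ))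
      = (ℓ : ℤ) * ((n : ℤ) - ℓ) + (∑ k : Fin ℓ, ((k : ℕ) : ℤ))
        - ∑ k : Fin ℓ, ((A.orderEmbOfFin hA k : ℕ) : ℤ) := by
    rw [Finset.sum_sub_distrib, Finset.sum_add_distrib, Finset.sum_const, Finset.card_univ,
      Fintype.card_fin, nsmul_eq_mul]
  rw [codimC, dimC, hA, hs, Nat.cast_sum, Finset.sum_congr rfl (fun k _ => hterm k), hsplit,
    gauss]
  ring
end aux
section stair
variable {n ℓ : ℕ}

/-- the staircase function -/
def gst (n ℓ i0 j0 : ℕ) (hle : ℓ ≤ n) : Fin ℓ → Fin n := fun k =>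
  ⟨if (k : ℕ) < i0 then (k : ℕ) else n - ℓ + (k : ℕ) - j0, by
    have := k.2; split <;> omega⟩

lemma gst_val (hle : ℓ ≤ n) (i0 j0 : ℕ) (k : Fin ℓ) :
    (gst n ℓ i0 j0 hle k : ℕ) = if (k : ℕ) < i0 then (k : ℕ) else n - ℓ + (k : ℕ) - j0 := rfl

lemma gst_mono (hle : ℓ ≤ n) {i0 j0 : ℕ} (hj : j0 + ℓ ≤ n) :
    StrictMono (gst n ℓ i0 j0 hle) := by
  intro k k' hkk
  have hk := k.2
  have hk' := k'.2
  have hkk' : (k : ℕ) < (k' : ℕ) := hkk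
  rw [Fin.lt_def, gst_val, gst_val]
  split <;> split <;> omega

/-- the staircase set -/
def Bst (n ℓ i0 j0 : ℕ) (hle : ℓ ≤ n) : Finset (Fin n) :=
  Finset.image (gst n ℓ i0 j0 hle) Finset.univ

lemma Bst_card (hle : ℓ ≤ n) {i0 j0 : ℕ} (hj : j0 + ℓ ≤ n) :
    (Bst n ℓ i0 j0 hle).card = ℓ := by
  rw [Bst, Finset.card_image_of_injective _ (gst_mono hle hj).injective, Finset.card_univ,
    Fintype.card_fin]

lemma Bst_emb (hle : ℓ ≤ n) {i0 j0 : ℕ} (hj : j0 + ℓ ≤ n) :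
    ⇑((Bst n ℓ i0 j0 hle).orderEmbOfFin (Bst_card hle hj)) = gst n ℓ i0 j0 hle :=
  (Finset.orderEmbOfFin_unique _ (fun x => Finset.mem_image_of_mem _ (Finset.mem_univ x))
    (gst_mono hle hj)).symm

lemma Bst_inj (hle : ℓ ≤ n) {i0 j0 i0' j0' : ℕ} (hi : i0 < ℓ) (hi' : i0' < ℓ)
    (hj : j0 + ℓ < n) (hj' : j0' + ℓ < n)
    (hE : Bst n ℓ i0 j0 hle = Bst n ℓ i0' j0' hle) : i0 = i0' ∧ j0 = j0' := by
  have hfun : gst n ℓ i0 j0 hle = gst n ℓ i0' j0' hle := by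
    have h1 := Finset.orderEmbOfFin_unique (Bst_card hle (le_of_lt hj))
      (f := gst n ℓ i0 j0 hle)
      (fun x => Finset.mem_image_of_mem _ (Finset.mem_univ x)) (gst_mono hle (le_of_lt hj))
    have h2 := Finset.orderEmbOfFin_unique (Bst_card hle (le_of_lt hj))
      (f := gst n ℓ i0' j0' hle)
      (fun x => by rw [hE]; exact Finset.mem_image_of_mem _ (Finset.mem_univ x))
      (gst_mono hle (le_of_lt hj'))
    rw [h1, h2]
  have hℓ : 0 < ℓ := lt_of_le_of_lt (Nat.zero_le _) hi
  have hlast := congrArg Fin.val (congrFun hfun ⟨ℓ - 1, by omega⟩)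
  rw [gst_val, gst_val] at hlast
  simp only [Fin.val_mk] at hlast
  have hjj : j0 = j0' := by
    have ht1 : ¬ (ℓ - 1 < i0) := by omega
    have ht2 : ¬ (ℓ - 1 < i0') := by omega
    rw [if_neg ht1, if_neg ht2] at hlast
    omega
  refine ⟨?_, hjj⟩
  rcases lt_trichotomy i0 i0' with h | h | h
  · exfalso
    have := congrArg Fin.val (congrFun hfun ⟨i0, hi⟩)
    rw [gst_val, gst_val] at this
    simp only [Fin.val_mk] at this
    split_ifs at this <;> omega
  · exact h
  · exfalso
    have := congrArg Fin.val (congrFun hfun ⟨i0', hi'⟩)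
    rw [gst_val, gst_val] at this
    simp only [Fin.val_mk] at this
    split_ifs at this <;> omega

end stair
section count
variable {n ℓ : ℕ}

/-- index set of cells -/
def cT {A : Finset (Fin n)} (hA : A.card = ℓ) : Finset (Fin ℓ × Fin n) :=
  Finset.univ.filter
    (fun p => (p.2 : ℕ) + ℓ + (A.orderEmbOfFin hA p.1 : ℕ) < n + (p.1 : ℕ))

lemma card_fin_lt (c : ℕ) (hc : c ≤ n) :
    (Finset.univ.filter fun j : Fin n => (j : ℕ) < c).card = c := by
  conv_rhs => rw [← Finset.card_range c]
  refine Finset.card_bij (fun j _ => (j : ℕ)) ?_ ?_ ?_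
  · intro a ha
    rw [Finset.mem_filter] at ha
    exact Finset.mem_range.mpr ha.2
  · intro a _ b _ h
    exact Fin.ext h
  · intro b hb
    rw [Finset.mem_range] at hb
    exact ⟨⟨b, lt_of_lt_of_le hb hc⟩, Finset.mem_filter.mpr ⟨Finset.mem_univ _, hb⟩, rfl⟩

lemma cT_card {A : Finset (Fin n)} (hA : A.card = ℓ) :
    (cT hA).card = ∑ k : Fin ℓ, (n - ℓ + (k : ℕ) - (A.orderEmbOfFin hA k : ℕ)) := by
  classical
  have hln : ℓ ≤ n := by rw [← hA]; simpa using Finset.card_le_univ A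
  rw [cT, Finset.card_filter, Fintype.sum_prod_type]
  apply Finset.sum_congr rfl
  intro k _
  rw [← Finset.card_filter]
  have h1 := emb_le (A.orderEmbOfFin hA).strictMono k
  have h2 := k.2
  have he : (Finset.univ.filter
      fun j : Fin n => (j : ℕ) + ℓ + (A.orderEmbOfFin hA k : ℕ) < n + (k : ℕ)) =
      (Finset.univ.filter
      fun j : Fin n => (j : ℕ) < n - ℓ + (k : ℕ) - (A.orderEmbOfFin hA k : ℕ)) := by
    apply Finset.filter_congr
    intro j _
    constructor <;> (intro h; omega)
  rw [he, card_fin_lt _ (by omega)]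

/-- the set counted by `normC` -/
noncomputable def Sset (n ℓ : ℕ) (A : Finset (Fin n)) : Finset (Finset (Fin n)) :=
  @Finset.filter _ (fun B => B.card = ℓ ∧ ¬ cleC B A) (Classical.decPred _) Finset.univ

lemma mem_Sset {A B : Finset (Fin n)} : B ∈ Sset n ℓ A ↔ B.card = ℓ ∧ ¬ cleC B A := by
  simp only [Sset, Finset.mem_filter, Finset.mem_univ, true_and]

lemma normC_eq (A : Finset (Fin n)) : normC n ℓ A = (Sset n ℓ A).card := by
  classical
  rw [normC, Nat.card_eq_fintype_card, Fintype.card_subtype, Sset]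
  congr 1
  congr

lemma codim_eq_cT {A : Finset (Fin n)} (hA : A.card = ℓ) :
    codimC A = ((cT hA).card : ℤ) := by
  rw [codim_eq hA, cT_card hA]

lemma cT_maps {A : Finset (Fin n)} (hA : A.card = ℓ) (hle : ℓ ≤ n) {p : Fin ℓ × Fin n}
    (hp : p ∈ cT hA) :
    (p.2 : ℕ) + ℓ < n ∧ Bst n ℓ (p.1 : ℕ) (p.2 : ℕ) hle ∈ Sset n ℓ A := by
  classical
  rw [cT, Finset.mem_filter] at hp
  have hp := hp.2
  have hia := le_emb (A.orderEmbOfFin hA).strictMono p.1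
  have hjn : (p.2 : ℕ) + ℓ < n := by omega
  refine ⟨hjn, ?_⟩
  rw [mem_Sset]
  refine ⟨Bst_card hle (le_of_lt hjn), ?_⟩
  rw [cle_iff hA (Bst_card hle (le_of_lt hjn))]
  intro hc
  have := hc p.1
  rw [Fin.le_def] at this
  rw [Bst_emb hle (le_of_lt hjn)] at this
  rw [gst_val] at this
  rw [if_neg (lt_irrefl ((p.1 : ℕ)))] at this
  omega

lemma codim_le_norm {A : Finset (Fin n)} (hA : A.card = ℓ) (hle : ℓ ≤ n) :
    (cT hA).card ≤ (Sset n ℓ A).card := by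
  apply Finset.card_le_card_of_injOn
    (fun p => Bst n ℓ (p.1 : ℕ) (p.2 : ℕ) hle)
  · intro p hp
    exact (cT_maps hA hle hp).2
  · intro p hp q hq hE
    have hp' := (cT_maps hA hle hp).1
    have hq' := (cT_maps hA hle hq).1
    have := Bst_inj hle p.1.2 q.1.2 hp' hq' hE
    ext
    · exact this.1
    · exact this.2

lemma norm_eq_of_surj {A : Finset (Fin n)} (hA : A.card = ℓ) (hle : ℓ ≤ n)
    (hs : ∀ B ∈ Sset n ℓ A, ∃ p ∈ cT hA, B = Bst n ℓ (p.1 : ℕ) (p.2 : ℕ) hle) :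
    (Sset n ℓ A).card = (cT hA).card := by
  apply le_antisymm _ (codim_le_norm hA hle)
  apply Finset.card_le_card_of_surjOn (fun p => Bst n ℓ (p.1 : ℕ) (p.2 : ℕ) hle)
  intro B hB
  obtain ⟨p, hp, hBp⟩ := hs B hB
  exact ⟨p, hp, hBp.symm⟩

end count
section hook
variable {n ℓ : ℕ}

def ghook (n ℓ : ℕ) (hle : ℓ ≤ n) : Fin ℓ → Fin n := fun k =>
  ⟨if (k : ℕ) = 0 then n - ℓ - 1 else n - ℓ + (k : ℕ), by
    have := k.2; split <;> omega⟩

lemma ghook_val (hle : ℓ ≤ n) (k : Fin ℓ) :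
    (ghook n ℓ hle k : ℕ) = if (k : ℕ) = 0 then n - ℓ - 1 else n - ℓ + (k : ℕ) := rfl

lemma ghook_mono (hle : ℓ ≤ n) (hn : ℓ < n) : StrictMono (ghook n ℓ hle) := by
  intro k k' hkk
  have hk := k.2
  have hk' := k'.2
  have hkk' : (k : ℕ) < (k' : ℕ) := hkk
  rw [Fin.lt_def, ghook_val, ghook_val]
  split <;> split <;> omega

lemma hook_eq (hle : ℓ ≤ n) (hn : ℓ < n) (hℓ : 0 < ℓ) :
    hookC n ℓ = Finset.image (ghook n ℓ hle) Finset.univ := by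
  ext x
  simp only [hookC, Finset.mem_filter, Finset.mem_univ, true_and, Finset.mem_image]
  constructor
  · rintro (h | h)
    · refine ⟨⟨0, hℓ⟩, ?_⟩
      apply Fin.ext
      rw [ghook_val]
      simp only [Fin.val_mk, if_true]
      omega
    · have hx := x.2
      refine ⟨⟨(x : ℕ) - (n - ℓ), by omega⟩, ?_⟩
      apply Fin.ext
      rw [ghook_val]
      simp only [Fin.val_mk]
      split <;> omega
  · rintro ⟨k, rfl⟩
    rw [ghook_val]
    have := k.2
    split <;> omega

lemma hook_card (hle : ℓ ≤ n) (hn : ℓ < n) (hℓ : 0 < ℓ) : (hookC n ℓ).card = ℓ := by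
  rw [hook_eq hle hn hℓ, Finset.card_image_of_injective _ (ghook_mono hle hn).injective,
    Finset.card_univ, Fintype.card_fin]

lemma hook_emb (hle : ℓ ≤ n) (hn : ℓ < n) (hℓ : 0 < ℓ) :
    ⇑((hookC n ℓ).orderEmbOfFin (hook_card hle hn hℓ)) = ghook n ℓ hle :=
  (Finset.orderEmbOfFin_unique _
    (fun x => by rw [hook_eq hle hn hℓ]; exact Finset.mem_image_of_mem _ (Finset.mem_univ x))
    (ghook_mono hle hn)).symm

lemma hook_codim (hle : ℓ ≤ n) (hn : ℓ < n) (hℓ : 0 < ℓ) : codimC (hookC n ℓ) = 1 := by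
  rw [codim_eq (hook_card hle hn hℓ)]
  have hterm : ∀ k : Fin ℓ,
      n - ℓ + (k : ℕ) - ((hookC n ℓ).orderEmbOfFin (hook_card hle hn hℓ) k : ℕ)
        = if k = (⟨0, hℓ⟩ : Fin ℓ) then 1 else 0 := by
    intro k
    have hkv : ((hookC n ℓ).orderEmbOfFin (hook_card hle hn hℓ) k : ℕ)
        = if (k : ℕ) = 0 then n - ℓ - 1 else n - ℓ + (k : ℕ) := by
      rw [hook_emb hle hn hℓ, ghook_val]
    rw [hkv]
    by_cases hk : k = (⟨0, hℓ⟩ : Fin ℓ)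
    · subst hk
      simp only [Fin.val_mk, if_true]
      omega
    · have hk' : (k : ℕ) ≠ 0 := fun h => hk (Fin.ext h)
      rw [if_neg hk', if_neg hk]
      omega
  rw [Finset.sum_congr rfl (fun k _ => hterm k), Finset.sum_ite_eq' Finset.univ]
  simp

lemma hook_surj (hle : ℓ ≤ n) (hn : ℓ < n) (hℓ : 0 < ℓ) :
    ∀ B ∈ Sset n ℓ (hookC n ℓ), ∃ p ∈ cT (hook_card hle hn hℓ),
      B = Bst n ℓ ((p.1 : ℕ)) ((p.2 : ℕ)) hle := by
  intro B hB
  rw [mem_Sset] at hB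
  obtain ⟨hBc, hnc⟩ := hB
  rw [cle_iff (hook_card hle hn hℓ) hBc] at hnc
  push_neg at hnc
  obtain ⟨k0, hk0⟩ := hnc
  have hk0v : ((hookC n ℓ).orderEmbOfFin (hook_card hle hn hℓ) k0 : ℕ)
      < (B.orderEmbOfFin hBc k0 : ℕ) := hk0
  have hav : ((hookC n ℓ).orderEmbOfFin (hook_card hle hn hℓ) k0 : ℕ)
      = if (k0 : ℕ) = 0 then n - ℓ - 1 else n - ℓ + (k0 : ℕ) := by
    rw [hook_emb hle hn hℓ, ghook_val]
  have hup := emb_le (B.orderEmbOfFin hBc).strictMono k0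
  have hk00 : (k0 : ℕ) = 0 := by
    by_contra h
    rw [if_neg h] at hav
    omega
  -- now b 0 ≥ n - ℓ, hence b k = n - ℓ + k for all k
  have hb0 : n - ℓ ≤ (B.orderEmbOfFin hBc k0 : ℕ) := by
    rw [if_pos hk00] at hav
    omega
  have hbv : ∀ k : Fin ℓ, (B.orderEmbOfFin hBc k : ℕ) = n - ℓ + (k : ℕ) := by
    intro k
    have hupk := emb_le (B.orderEmbOfFin hBc).strictMono k
    have hgap := embGap (B.orderEmbOfFin hBc).strictMono ((k : ℕ)) ⟨0, hℓ⟩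
      (by simpa using k.2)
    have he1 : (⟨(0 : ℕ) + (k : ℕ), by simpa using k.2⟩ : Fin ℓ) = k := by ext; simp
    rw [he1] at hgap
    have he2 : (⟨0, hℓ⟩ : Fin ℓ) = k0 := by ext; simp [hk00.symm]
    rw [he2] at hgap
    have hk := k.2
    omega
  refine ⟨(⟨0, hℓ⟩, ⟨0, by omega⟩), ?_, ?_⟩
  · rw [cT, Finset.mem_filter]
    refine ⟨Finset.mem_univ _, ?_⟩
    dsimp only
    rw [hook_emb hle hn hℓ, ghook_val]
    simp only [Fin.val_mk, if_true]
    omega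
  · have hbg : ⇑(B.orderEmbOfFin hBc) = gst n ℓ 0 0 hle := by
      funext k
      apply Fin.ext
      rw [gst_val, hbv k]
      simp
    show B = Bst n ℓ 0 0 hle
    conv_lhs => rw [eq_image hBc]
    rw [Bst, ← hbg]
end hook
section strict
variable {n ℓ : ℕ}

lemma hook_norm (hle : ℓ ≤ n) (hn : ℓ < n) (hℓ : 0 < ℓ) : normC n ℓ (hookC n ℓ) = 1 := by
  have h1 : codimC (hookC n ℓ) = ((cT (hook_card hle hn hℓ)).card : ℤ) := codim_eq_cT _
  rw [hook_codim hle hn hℓ] at h1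
  have h2 : (cT (hook_card hle hn hℓ)).card = 1 := by exact_mod_cast h1.symm
  rw [normC_eq, norm_eq_of_surj (hook_card hle hn hℓ) hle (hook_surj hle hn hℓ), h2]

lemma hook_mem_Sset (hl2 : 2 ≤ ℓ) (hn2 : ℓ + 2 ≤ n) {A : Finset (Fin n)} (hA : A.card = ℓ)
    (hne : A ≠ hookC n ℓ) (hpos : 0 < codimC A) : hookC n ℓ ∈ Sset n ℓ A := by
  have hle : ℓ ≤ n := by omega
  have hn : ℓ < n := by omega
  have hℓ : 0 < ℓ := by omega
  rw [mem_Sset]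
  refine ⟨hook_card hle hn hℓ, ?_⟩
  rw [cle_iff hA (hook_card hle hn hℓ)]
  intro hc
  have hcv : ∀ k : Fin ℓ, (ghook n ℓ hle k : ℕ) ≤ (A.orderEmbOfFin hA k : ℕ) := by
    intro k
    have h := hc k
    rw [Fin.le_def, hook_emb hle hn hℓ] at h
    exact h
  have hup : ∀ k : Fin ℓ, (A.orderEmbOfFin hA k : ℕ) + ℓ ≤ n + (k : ℕ) :=
    fun k => emb_le (A.orderEmbOfFin hA).strictMono k
  by_cases h0 : (A.orderEmbOfFin hA ⟨0, hℓ⟩ : ℕ) = n - ℓ - 1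
  · apply hne
    have hfun : ⇑(A.orderEmbOfFin hA) = ghook n ℓ hle := by
      funext k
      apply Fin.ext
      rw [ghook_val]
      by_cases hk : (k : ℕ) = 0
      · rw [if_pos hk, show k = ⟨0, hℓ⟩ from Fin.ext hk]
        exact h0
      · rw [if_neg hk]
        have h1 := hcv k
        rw [ghook_val, if_neg hk] at h1
        have h2 := hup k
        have := k.2
        omega
    conv_lhs => rw [eq_image hA]
    rw [hook_eq hle hn hℓ, ← hfun]
  · have hz : codimC A = 0 := by
      rw [codim_eq hA]
      have hz' : (∑ k : Fin ℓ, (n - ℓ + (k : ℕ) - (A.orderEmbOfFin hA k : ℕ))) = 0 := by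
        apply Finset.sum_eq_zero
        intro k _
        by_cases hk : (k : ℕ) = 0
        · have hk' : k = ⟨0, hℓ⟩ := Fin.ext hk
          have h1 := hcv k
          rw [ghook_val, if_pos hk] at h1
          rw [hk'] at h1 ⊢
          simp only [Fin.val_mk]
          have := hup ⟨0, hℓ⟩
          simp only [Fin.val_mk] at this
          omega
        · have h1 := hcv k
          rw [ghook_val, if_neg hk] at h1
          omega
      rw [hz']
      simp
    omega


lemma Bst_ne_hook (hl2 : 2 ≤ ℓ) (hn2 : ℓ + 2 ≤ n) {i0 j0 : ℕ} (hi : i0 < ℓ) (hj : j0 + ℓ < n)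
    (hle : ℓ ≤ n) : Bst n ℓ i0 j0 hle ≠ hookC n ℓ := by
  have hn : ℓ < n := by omega
  have hℓ : 0 < ℓ := by omega
  intro hE
  have h1 : gst n ℓ i0 j0 hle
      = ⇑((Bst n ℓ i0 j0 hle).orderEmbOfFin (Bst_card hle (le_of_lt hj))) :=
    (Bst_emb hle (le_of_lt hj)).symm
  have h2 : ghook n ℓ hle
      = ⇑((Bst n ℓ i0 j0 hle).orderEmbOfFin (Bst_card hle (le_of_lt hj))) :=
    Finset.orderEmbOfFin_unique _
      (fun x => by
        rw [hE, hook_eq hle hn hℓ]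
        exact Finset.mem_image_of_mem _ (Finset.mem_univ x))
      (ghook_mono hle hn)
  have hfun := h1.trans h2.symm
  have hj0 : j0 = 0 := by
    have h := congrArg Fin.val (congrFun hfun ⟨ℓ - 1, by omega⟩)
    rw [gst_val, ghook_val] at h
    simp only [Fin.val_mk] at h
    rw [if_neg (by omega), if_neg (by omega)] at h
    omega
  have h := congrArg Fin.val (congrFun hfun ⟨0, hℓ⟩)
  rw [gst_val, ghook_val] at h
  simp only [Fin.val_mk] at h
  split_ifs at h <;> omega

lemma strict_lt {A : Finset (Fin n)} (hl2 : 2 ≤ ℓ) (hn2 : ℓ + 2 ≤ n) (hA : A.card = ℓ)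
    (hne : A ≠ hookC n ℓ) (hpos : 0 < codimC A) (hle : ℓ ≤ n) :
    (cT hA).card + 1 ≤ (Sset n ℓ A).card := by
  have hmem := hook_mem_Sset hl2 hn2 hA hne hpos
  have hsub : (cT hA).card ≤ ((Sset n ℓ A).erase (hookC n ℓ)).card := by
    apply Finset.card_le_card_of_injOn (fun p => Bst n ℓ (p.1 : ℕ) (p.2 : ℕ) hle)
    · intro p hp
      rw [Finset.mem_coe, Finset.mem_erase]
      exact ⟨Bst_ne_hook hl2 hn2 p.1.2 (cT_maps hA hle hp).1 hle, (cT_maps hA hle hp).2⟩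
    · intro p hp q hq hE
      have hp' := (cT_maps hA hle hp).1
      have hq' := (cT_maps hA hle hq).1
      have := Bst_inj hle p.1.2 q.1.2 hp' hq' hE
      ext
      · exact this.1
      · exact this.2
  rw [Finset.card_erase_of_mem hmem] at hsub
  have h1 : 1 ≤ (Sset n ℓ A).card := Finset.card_pos.mpr ⟨_, hmem⟩
  omega

end strict
section special
variable {n : ℕ}

lemma branch_l1 (A : Finset (Fin n)) (hA : A.card = 1) :
    codimC A = (normC n 1 A : ℤ) := by
  classical
  have hle : (1 : ℕ) ≤ n := by rw [← hA]; simpa using Finset.card_le_univ A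
  have hsurj : ∀ B ∈ Sset n 1 A, ∃ p ∈ cT hA,
      B = Bst n 1 ((p.1 : ℕ)) ((p.2 : ℕ)) hle := by
    intro B hB
    rw [mem_Sset] at hB
    obtain ⟨hBc, hnc⟩ := hB
    rw [cle_iff hA hBc] at hnc
    push_neg at hnc
    obtain ⟨k, hk⟩ := hnc
    have hkv : (A.orderEmbOfFin hA k : ℕ) < (B.orderEmbOfFin hBc k : ℕ) := hk
    have hb := (B.orderEmbOfFin hBc k).2
    have hk2 := k.2
    refine ⟨(k, ⟨n - 1 - (B.orderEmbOfFin hBc k : ℕ), by omega⟩), ?_, ?_⟩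
    · rw [cT, Finset.mem_filter]
      refine ⟨Finset.mem_univ _, ?_⟩
      dsimp only
      omega
    · show B = Bst n 1 ((k : ℕ)) (n - 1 - (B.orderEmbOfFin hBc k : ℕ)) hle
      have hbg : ⇑(B.orderEmbOfFin hBc)
          = gst n 1 ((k : ℕ)) (n - 1 - (B.orderEmbOfFin hBc k : ℕ)) hle := by
        funext k'
        have hk' : k' = k := Subsingleton.elim _ _
        subst hk'
        apply Fin.ext
        rw [gst_val, if_neg (lt_irrefl _)]
        omega
      conv_lhs => rw [eq_image hBc]
      rw [Bst, ← hbg]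
  rw [normC_eq, norm_eq_of_surj hA hle hsurj]
  exact codim_eq_cT hA

lemma branch_l0 (A : Finset (Fin n)) (hA : A.card = 0) :
    codimC A = (normC n 0 A : ℤ) := by
  classical
  have hA0 : A = ∅ := Finset.card_eq_zero.mp hA
  subst hA0
  have h1 : codimC (∅ : Finset (Fin n)) = 0 := by simp [codimC, dimC]
  have h2 : normC n 0 (∅ : Finset (Fin n)) = 0 := by
    rw [normC_eq, Finset.card_eq_zero]
    ext B
    simp only [Finset.notMem_empty, iff_false]
    rw [mem_Sset]
    rintro ⟨hBc, hnc⟩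
    apply hnc
    have hB0 : B = ∅ := Finset.card_eq_zero.mp hBc
    subst hB0
    rw [cleC, Finset.sort_empty]
    exact List.Forall₂.nil
  rw [h1, h2]
  rfl

lemma branch_m1 (n : ℕ) (hn : 1 ≤ n) (A : Finset (Fin n)) (hA : A.card = n - 1) :
    codimC A = (normC n (n - 1) A : ℤ) := by
  classical
  have hn1 : n = (n - 1) + 1 := by omega
  have hle : n - 1 ≤ n := by omega
  have hsurj : ∀ B ∈ Sset n (n - 1) A, ∃ p ∈ cT hA,
      B = Bst n (n - 1) ((p.1 : ℕ)) ((p.2 : ℕ)) hle := by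
    intro B hB
    rw [mem_Sset] at hB
    obtain ⟨hBc, hnc⟩ := hB
    rw [cle_iff hA hBc] at hnc
    push_neg at hnc
    obtain ⟨ks, hks⟩ := hnc
    have hksv : (A.orderEmbOfFin hA ks : ℕ) < (B.orderEmbOfFin hBc ks : ℕ) := hks
    have hP : ∃ m, ∃ hm : m < n - 1, m < (B.orderEmbOfFin hBc ⟨m, hm⟩ : ℕ) := by
      refine ⟨(ks : ℕ), ks.2, ?_⟩
      have h1 := le_emb (A.orderEmbOfFin hA).strictMono ks
      have he : (⟨(ks : ℕ), ks.2⟩ : Fin (n - 1)) = ks := by ext; rfl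
      rw [he]
      omega
    obtain ⟨hi0ℓ, hi0b⟩ := Nat.find_spec hP
    have hupk : ∀ k : Fin (n - 1), (B.orderEmbOfFin hBc k : ℕ) ≤ (k : ℕ) + 1 := by
      intro k
      have := emb_le (B.orderEmbOfFin hBc).strictMono k
      have := k.2
      omega
    have hbv : ∀ k : Fin (n - 1), (B.orderEmbOfFin hBc k : ℕ)
        = if (k : ℕ) < Nat.find hP then (k : ℕ) else (k : ℕ) + 1 := by
      intro k
      split
      · next hki =>
        have hnP := Nat.find_min hP hki
        have hge := le_emb (B.orderEmbOfFin hBc).strictMono k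
        have he : (⟨(k : ℕ), k.2⟩ : Fin (n - 1)) = k := by ext; rfl
        by_contra hne'
        exact hnP ⟨k.2, by rw [he]; omega⟩
      · next hki =>
        have hgap := embGap (B.orderEmbOfFin hBc).strictMono
          ((k : ℕ) - Nat.find hP) ⟨Nat.find hP, hi0ℓ⟩ (by simp only [Fin.val_mk]; omega)
        have he : (⟨((⟨Nat.find hP, hi0ℓ⟩ : Fin (n - 1)) : ℕ) + ((k : ℕ) - Nat.find hP),
            by simp only [Fin.val_mk]; omega⟩ : Fin (n - 1)) = k := by
          ext; simp only [Fin.val_mk]; omega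
        rw [he] at hgap
        have hup0 := hupk ⟨Nat.find hP, hi0ℓ⟩
        simp only [Fin.val_mk] at hgap hup0 hi0b
        have := hupk k
        omega
    have hi0ks : Nat.find hP ≤ (ks : ℕ) := by
      apply Nat.find_le
      refine ⟨ks.2, ?_⟩
      have h1 := le_emb (A.orderEmbOfFin hA).strictMono ks
      have he : (⟨(ks : ℕ), ks.2⟩ : Fin (n - 1)) = ks := by ext; rfl
      rw [he]
      omega
    have hai : (A.orderEmbOfFin hA ⟨Nat.find hP, hi0ℓ⟩ : ℕ) ≤ Nat.find hP := by
      have hgap := embGap (A.orderEmbOfFin hA).strictMono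
        ((ks : ℕ) - Nat.find hP) ⟨Nat.find hP, hi0ℓ⟩ (by simp only [Fin.val_mk]; omega)
      have he : (⟨((⟨Nat.find hP, hi0ℓ⟩ : Fin (n - 1)) : ℕ) + ((ks : ℕ) - Nat.find hP),
          by simp only [Fin.val_mk]; omega⟩ : Fin (n - 1)) = ks := by
        ext; simp only [Fin.val_mk]; omega
      rw [he] at hgap
      have h2 := hupk ks
      omega
    refine ⟨(⟨Nat.find hP, hi0ℓ⟩, ⟨0, by omega⟩), ?_, ?_⟩
    · rw [cT, Finset.mem_filter]
      refine ⟨Finset.mem_univ _, ?_⟩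
      dsimp only
      omega
    · show B = Bst n (n - 1) (Nat.find hP) 0 hle
      have hbg : ⇑(B.orderEmbOfFin hBc) = gst n (n - 1) (Nat.find hP) 0 hle := by
        funext k
        apply Fin.ext
        rw [gst_val, hbv k]
        have := k.2
        split <;> omega
      conv_lhs => rw [eq_image hBc]
      rw [Bst, ← hbg]
  rw [normC_eq, norm_eq_of_surj hA hle hsurj]
  exact codim_eq_cT hA

end special


/-- For `1 < ℓ < n-1`: `|α| = ‖α‖` with `|α| > 0` iff
`α = (n-ℓ, n-ℓ+2, …, n)`, in which case both equal 1; and if `ℓ = 1` or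
`ℓ = n-1` then `|α| = ‖α‖` for all `α`. -/
theorem stmt13 {n ℓ : ℕ} :
    (1 < ℓ → ℓ < n - 1 → ∀ A : Finset (Fin n), A.card = ℓ →
      (((codimC A = (normC n ℓ A : ℤ) ∧ 0 < codimC A) ↔ A = hookC n ℓ) ∧
       (A = hookC n ℓ → codimC A = 1 ∧ normC n ℓ A = 1))) ∧
    ((ℓ = 1 ∨ ℓ = n - 1) → ∀ A : Finset (Fin n), A.card = ℓ →
      codimC A = (normC n ℓ A : ℤ)) := by
  constructor
  · intro h1 h2 A hA
    have hl2 : 2 ≤ ℓ := h1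
    have hn2 : ℓ + 2 ≤ n := by omega
    have hle : ℓ ≤ n := by omega
    have hn : ℓ < n := by omega
    have hℓ : 0 < ℓ := by omega
    constructor
    · constructor
      · rintro ⟨heq, hpos⟩
        by_contra hne
        have hstrict := strict_lt hl2 hn2 hA hne hpos hle
        have hc1 : codimC A = ((cT hA).card : ℤ) := codim_eq_cT hA
        rw [normC_eq] at heq
        have hcast : ((cT hA).card : ℤ) = ((Sset n ℓ A).card : ℤ) := by rw [← hc1, heq]
        have hnat : (cT hA).card = (Sset n ℓ A).card := by exact_mod_cast hcast
        omega
      · intro hEq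
        subst hEq
        refine ⟨?_, ?_⟩
        · rw [hook_codim hle hn hℓ, hook_norm hle hn hℓ]
          norm_num
        · rw [hook_codim hle hn hℓ]
          norm_num
    · intro hEq
      subst hEq
      exact ⟨hook_codim hle hn hℓ, hook_norm hle hn hℓ⟩
  · rintro (hl | hl) A hA
    · subst hl
      exact branch_l1 A hA
    · subst hl
      rcases Nat.lt_or_ge n 1 with hn | hn
      · have hn0 : n = 0 := by omega
        subst hn0
        exact branch_l0 A hA
      · exact branch_m1 n hn A hA
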